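/- Let B be a cyclic real skew-symmetric 3×3 matrix with weights p = |b_12|, q = |b_23|, r = |b_31|, all positive. If r = 2 and p ≠ q, then B is mutation-acyclic: some matrix in its mutation class is acyclic. -/

import Mathlib

open Matrix
noncomputable section

/-- Mutation of a real `3 × 3` matrix in direction `k`. -/
def mutate (k : Fin 3) (B : Matrix (Fin 3) (Fin 3) ℝ) : Matrix (Fin 3) (Fin 3) ℝ :=
  Matrix.of fun i j =>
    if i = k ∨ j = k then -B i j
    else B i j + (|B i k| * B k j + B i k * |B k j|) / 2

/-- One step of mutation equivalence: a single mutation, or a simultaneous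
permutation of the index set. -/
def MutationStep (B B' : Matrix (Fin 3) (Fin 3) ℝ) : Prop :=
  (∃ k : Fin 3, B' = mutate k B) ∨
  (∃ σ : Equiv.Perm (Fin 3), B' = Matrix.of fun i j => B (σ i) (σ j))

/-- Mutation equivalence: a finite sequence of mutations and simultaneous permutations. -/
def MutationEquiv : Matrix (Fin 3) (Fin 3) ℝ → Matrix (Fin 3) (Fin 3) ℝ → Prop :=
  Relation.ReflTransGen MutationStep

/-- `B` is cyclic if `b₁₂, b₂₃, b₃₁` are all nonzero and of the same sign. -/
def IsCyclicMat (B : Matrix (Fin 3) (Fin 3) ℝ) : Prop :=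
  (0 < B 0 1 ∧ 0 < B 1 2 ∧ 0 < B 2 0) ∨ (B 0 1 < 0 ∧ B 1 2 < 0 ∧ B 2 0 < 0)

instance : DecidablePred IsCyclicMat := fun B => by
  unfold IsCyclicMat; exact inferInstance

/-- `B` is mutation-cyclic if every matrix in its mutation class is cyclic. -/
def IsMutationCyclic (B : Matrix (Fin 3) (Fin 3) ℝ) : Prop :=
  ∀ B', MutationEquiv B B' → IsCyclicMat B'

/-- `B` is mutation-acyclic if some matrix in its mutation class is acyclic. -/
def IsMutationAcyclic (B : Matrix (Fin 3) (Fin 3) ℝ) : Prop :=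
  ∃ B', MutationEquiv B B' ∧ ¬ IsCyclicMat B'

/-- The Markov constant `C(B)`. -/
def markov (B : Matrix (Fin 3) (Fin 3) ℝ) : ℝ :=
  (B 0 1) ^ 2 + (B 1 2) ^ 2 + (B 2 0) ^ 2 -
    (if IsCyclicMat B then 1 else -1) * |B 0 1 * B 1 2 * B 2 0|

/-- The Lorentzian symmetric bilinear form on `ℝ^{2,1}`. -/
def lform (x y : Fin 3 → ℝ) : ℝ := x 0 * y 0 + x 1 * y 1 - x 2 * y 2

/-- A realization of `B` by reflections: a triple of vectors of square norm `2`
whose pairwise inner products have the absolute values `|b_ij|`, with the parity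
condition on the number of positive inner products. -/
def ReflRealization {V : Type*} [AddCommGroup V] [Module ℝ V]
    (f : V →ₗ[ℝ] V →ₗ[ℝ] ℝ) (B : Matrix (Fin 3) (Fin 3) ℝ) (v : Fin 3 → V) : Prop :=
  (∀ i, f (v i) (v i) = 2) ∧
  (∀ i j, i ≠ j → |f (v i) (v j)| = |B i j|) ∧
  ((∀ i j, i ≠ j → f (v i) (v j) ≠ 0) →
    (Finset.univ.filter
        (fun p : Fin 3 × Fin 3 => p.1 < p.2 ∧ 0 < f (v p.1) (v p.2))).card % 2
      = if IsCyclicMat B then 1 else 0)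

/-- Mutation of a triple of vectors by partial reflections. -/
def mutateVecRefl {V : Type*} [AddCommGroup V] [Module ℝ V]
    (f : V →ₗ[ℝ] V →ₗ[ℝ] ℝ) (B : Matrix (Fin 3) (Fin 3) ℝ) (k : Fin 3) (v : Fin 3 → V) :
    Fin 3 → V :=
  fun j =>
    if j = k then -v k
    else if 0 < B j k then v j - f (v j) (v k) • v k
    else v j

/-- A realization of `B` by `π`-rotations: a triple of vectors in `ℝ^{2,1}` of square
norm `-2` with pairwise inner products `-|b₁₂|, -|b₂₃|, -|b₃₁|`. -/
def RotRealization (B : Matrix (Fin 3) (Fin 3) ℝ) (v : Fin 3 → (Fin 3 → ℝ)) : Prop :=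
  (∀ i, lform (v i) (v i) = -2) ∧
  lform (v 0) (v 1) = -|B 0 1| ∧ lform (v 1) (v 2) = -|B 1 2| ∧
  lform (v 2) (v 0) = -|B 2 0|

/-- Mutation of a triple of points by partial `π`-rotations. -/
def mutateVecRot (B : Matrix (Fin 3) (Fin 3) ℝ) (k : Fin 3) (v : Fin 3 → (Fin 3 → ℝ)) :
    Fin 3 → (Fin 3 → ℝ) :=
  fun j => if 0 < B j k then -v j - lform (v j) (v k) • v k else v j

def S (a b c : ℝ) : Matrix (Fin 3) (Fin 3) ℝ := !![0, a, -c; -a, 0, b; c, -b, 0]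

lemma mut0 (a b c : ℝ) :
    mutate 0 (S a b c) = S (-a) (b - (|a| * c + a * |c|)/2) (-c) := by
  ext i j
  fin_cases i <;> fin_cases j <;> simp [mutate, S, abs_neg] <;> ring

lemma mut2 (a b c : ℝ) :
    mutate 2 (S a b c) = S (a - (|c| * b + c * |b|)/2) (-b) (-c) := by
  ext i j
  fin_cases i <;> fin_cases j <;> simp [mutate, S, abs_neg] <;> ring

lemma cycS (a b c : ℝ) :
    IsCyclicMat (S a b c) ↔ (0 < a ∧ 0 < b ∧ 0 < c) ∨ (a < 0 ∧ b < 0 ∧ c < 0) := by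
  unfold IsCyclicMat S
  exact Iff.rfl

/-- state: `st true a b = S a b 2`, `st false a b = S (-a) (-b) (-2)`. -/
def st (ε : Bool) (a b : ℝ) : Matrix (Fin 3) (Fin 3) ℝ :=
  if ε then S a b 2 else S (-a) (-b) (-2)

lemma key : ∀ n : ℕ, ∀ (ε : Bool) (a b : ℝ), 0 < a → 0 < b → a ≠ b →
    a + b ≤ n * |a - b| → IsMutationAcyclic (st ε a b) := by
  intro n
  induction n with
  | zero =>
    intro ε a b ha hb _ hsum
    simp at hsum; linarith
  | succ n IH =>
    intro ε a b ha hb hne hsum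
    have hd : 0 < |a - b| := abs_pos.mpr (sub_ne_zero.mpr hne)
    rcases lt_or_gt_of_ne hne with hlt | hlt
    · -- a < b : mutate at 0, b ↦ 2a - b
      have hmut : mutate 0 (st ε a b) = st (!ε) a (2*a - b) := by
        cases ε <;> simp [st, mut0, abs_of_pos ha, abs_of_neg (neg_neg_iff_pos.mpr ha)]
          <;> norm_num <;> congr 1 <;> ring
      by_cases hpos : 0 < 2*a - b
      · -- still cyclic candidate; recurse
        have hne' : a ≠ 2*a - b := fun h => hne (by linarith)
        have habs : |a - (2*a - b)| = |a - b| := by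
          rw [show a - (2*a-b) = -(a-b) by ring, abs_neg]
        have hsum' : a + (2*a - b) ≤ n * |a - (2*a - b)| := by
          rw [habs]
          have h2 : |a - b| = -(a - b) := abs_of_neg (by linarith)
          rw [h2] at hsum ⊢
          push_cast at hsum ⊢
          linarith
        obtain ⟨C, hC, hnc⟩ := IH (!ε) a (2*a - b) ha hpos hne' hsum'
        exact ⟨C, Relation.ReflTransGen.head (Or.inl ⟨0, hmut.symm⟩) hC, hnc⟩
      · -- mutated matrix is acyclic
        push_neg at hpos
        refine ⟨mutate 0 (st ε a b), Relation.ReflTransGen.single (Or.inl ⟨0, rfl⟩), ?_⟩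
        rw [hmut]
        cases ε <;> simp [st, cycS] <;> intros <;> linarith
    · -- b < a : mutate at 2, a ↦ 2b - a
      have hmut : mutate 2 (st ε a b) = st (!ε) (2*b - a) b := by
        cases ε <;> simp [st, mut2, abs_of_pos hb, abs_of_neg (neg_neg_iff_pos.mpr hb)]
          <;> norm_num <;> congr 1 <;> ring
      by_cases hpos : 0 < 2*b - a
      · have hne' : (2*b - a) ≠ b := fun h => hne (by linarith)
        have hsum' : (2*b - a) + b ≤ n * |(2*b - a) - b| := by
          rw [show (2*b-a) - b = -(a-b) by ring, abs_neg]
          have h2 : |a - b| = a - b := abs_of_pos (by linarith)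
          rw [h2] at hsum ⊢
          push_cast at hsum ⊢
          linarith
        obtain ⟨C, hC, hnc⟩ := IH (!ε) (2*b - a) b hpos hb hne' hsum'
        exact ⟨C, Relation.ReflTransGen.head (Or.inl ⟨2, hmut.symm⟩) hC, hnc⟩
      · push_neg at hpos
        refine ⟨mutate 2 (st ε a b), Relation.ReflTransGen.single (Or.inl ⟨2, rfl⟩), ?_⟩
        rw [hmut]
        cases ε <;> simp [st, cycS] <;> intros <;> linarith

lemma decomp (B : Matrix (Fin 3) (Fin 3) ℝ) (hB : Bᵀ = -B) :
    B = S (B 0 1) (B 1 2) (B 2 0) := by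
  have h : ∀ i j, B j i = -B i j := fun i j => congrFun (congrFun hB i) j
  ext i j
  fin_cases i <;> fin_cases j <;>
    simp [S] <;>
    first
      | linarith [h 0 0]
      | linarith [h 1 1]
      | linarith [h 2 2]
      | linarith [h 0 1]
      | linarith [h 1 2]
      | linarith [h 2 0]


/-- a cyclic matrix with positive weights `p, q, r` with `r = 2` and
`p ≠ q` is mutation-acyclic. -/
theorem mutation_acyclic_of_weight_eq_two_ne
    (B : Matrix (Fin 3) (Fin 3) ℝ) (hB : Bᵀ = -B) (hcyc : IsCyclicMat B)
    (hp : 0 < |B 0 1|) (hq : 0 < |B 1 2|) (hr : 0 < |B 2 0|)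
    (hr2 : |B 2 0| = 2) (hpq : |B 0 1| ≠ |B 1 2|) :
    IsMutationAcyclic B := by
  have hBS : B = S (B 0 1) (B 1 2) (B 2 0) := decomp B hB
  obtain ⟨n, hn⟩ := exists_nat_ge ((|B 0 1| + |B 1 2|) / |(|B 0 1| - |B 1 2|)|)
  have hd : 0 < |(|B 0 1| - |B 1 2|)| := abs_pos.mpr (sub_ne_zero.mpr hpq)
  have hsum : |B 0 1| + |B 1 2| ≤ n * |(|B 0 1| - |B 1 2|)| := by
    rw [div_le_iff₀ hd] at hn; linarith
  rcases hcyc with ⟨h1, h2, h3⟩ | ⟨h1, h2, h3⟩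
  · have hc2 : B 2 0 = 2 := by rw [← abs_of_pos h3]; exact hr2
    have hE : B = st true |B 0 1| |B 1 2| := by
      rw [st, if_pos rfl, abs_of_pos h1, abs_of_pos h2, ← hc2]
      exact hBS
    rw [hE]
    exact key n true _ _ hp hq hpq hsum
  · have hc2 : B 2 0 = -2 := by
      have h := abs_of_neg h3; rw [hr2] at h; linarith
    have hE : B = st false |B 0 1| |B 1 2| := by
      rw [st, if_neg (by simp), abs_of_neg h1, abs_of_neg h2, neg_neg, neg_neg, ← hc2]
      exact hBS
    rw [hE]
    exact key n false _ _ hp hq hpq hsum
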